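/- Let ω ∈ ℝ, ζ ∈ ℂ, and let φ : ℝ → ℂ be twice continuously differentiable and satisfy the stationary focusing NLS equation ωφ = −(1/2)φ'' − |φ|²φ. Define A(x) = −iζ² + (i/2)|φ(x)|² + (i/2)ω, B(x) = ζφ(x) + (i/2)φ'(x), C(x) = −ζ·conj(φ(x)) + (i/2)·conj(φ)'(x). Then the function x ↦ A(x)² + B(x)C(x) is constant on ℝ. -/

import Mathlib

private lemma hasDerivAt_conj' {f : ℝ → ℂ} {f' : ℂ} {x : ℝ}
    (h : HasDerivAt f f' x) :
    HasDerivAt (fun y => (starRingEnd ℂ) (f y)) ((starRingEnd ℂ) f') x := by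
  simpa using h.star

/-- For a `C²` stationary solution `φ` of focusing NLS
(`ωφ = −(1/2)φ'' − |φ|²φ`) and any `ζ ∈ ℂ`, with
`A = −iζ² + (i/2)|φ|² + (i/2)ω`, `B = ζφ + (i/2)φ'`, `C = −ζ·conj(φ) + (i/2)·conj(φ)'`,
the function `x ↦ A(x)² + B(x)C(x)` is constant on ℝ. -/
theorem lax_A_sq_add_BC_const
    (ω : ℝ) (ζ : ℂ) (φ : ℝ → ℂ) (hφ : ContDiff ℝ 2 φ)
    (hstat : ∀ x : ℝ, (ω : ℂ) * φ x =
      -(1 / 2) * deriv (deriv φ) x - ((‖φ x‖ : ℝ) : ℂ) ^ 2 * φ x)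
    (A B C : ℝ → ℂ)
    (hA : ∀ x : ℝ, A x = -Complex.I * ζ ^ 2 +
      (Complex.I / 2) * ((‖φ x‖ : ℝ) : ℂ) ^ 2 + (Complex.I / 2) * (ω : ℂ))
    (hB : ∀ x : ℝ, B x = ζ * φ x + (Complex.I / 2) * deriv φ x)
    (hC : ∀ x : ℝ, C x = -ζ * (starRingEnd ℂ) (φ x) +
      (Complex.I / 2) * deriv (fun y => (starRingEnd ℂ) (φ y)) x) :
    ∀ x y : ℝ, A x ^ 2 + B x * C x = A y ^ 2 + B y * C y := by
  have hφ' : ContDiff ℝ (1 + 1 : WithTop ℕ∞) φ := by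
    norm_num
    exact hφ
  have hφ1 : Differentiable ℝ φ := hφ.differentiable (by norm_num)
  have hφ2 : Differentiable ℝ (deriv φ) :=
    (contDiff_succ_iff_deriv.mp hφ').2.2.differentiable (by norm_num)
  have habs : ∀ z : ℂ, ((‖z‖ : ℝ) : ℂ) ^ 2 = z * (starRingEnd ℂ) z := by
    intro z
    rw [Complex.mul_conj]
    norm_cast
    exact Complex.sq_norm z
  -- derivative of the conjugate
  have hq : ∀ t : ℝ, HasDerivAt (fun y => (starRingEnd ℂ) (φ y))
      ((starRingEnd ℂ) (deriv φ t)) t := fun t => hasDerivAt_conj' (hφ1 t).hasDerivAt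
  have hderivq : ∀ t : ℝ, deriv (fun y => (starRingEnd ℂ) (φ y)) t
      = (starRingEnd ℂ) (deriv φ t) := fun t => (hq t).deriv
  set g : ℝ → ℂ := fun t =>
    (-Complex.I * ζ ^ 2 + (Complex.I / 2) * (φ t * (starRingEnd ℂ) (φ t))
      + (Complex.I / 2) * (ω : ℂ)) *
    (-Complex.I * ζ ^ 2 + (Complex.I / 2) * (φ t * (starRingEnd ℂ) (φ t))
      + (Complex.I / 2) * (ω : ℂ)) +
    (ζ * φ t + (Complex.I / 2) * deriv φ t) *
    (-ζ * (starRingEnd ℂ) (φ t) + (Complex.I / 2) * (starRingEnd ℂ) (deriv φ t)) with hg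
  have hgeq : (fun t => A t ^ 2 + B t * C t) = g := by
    funext t
    rw [hA t, hB t, hC t, hderivq t, habs, hg]
    ring
  have key : ∀ x : ℝ, HasDerivAt g 0 x := by
    intro x
    have hp : HasDerivAt φ (deriv φ x) x := (hφ1 x).hasDerivAt
    have hd : HasDerivAt (deriv φ) (deriv (deriv φ) x) x := (hφ2 x).hasDerivAt
    have hqx : HasDerivAt (fun y => (starRingEnd ℂ) (φ y))
        ((starRingEnd ℂ) (deriv φ x)) x := hasDerivAt_conj' hp
    have hqd : HasDerivAt (fun y => (starRingEnd ℂ) (deriv φ y))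
        ((starRingEnd ℂ) (deriv (deriv φ) x)) x := hasDerivAt_conj' hd
    have hAder : HasDerivAt (fun t => -Complex.I * ζ ^ 2 +
        (Complex.I / 2) * (φ t * (starRingEnd ℂ) (φ t)) + (Complex.I / 2) * (ω : ℂ))
        ((Complex.I / 2) * (deriv φ x * (starRingEnd ℂ) (φ x)
          + φ x * (starRingEnd ℂ) (deriv φ x))) x :=
      (((hp.mul hqx).const_mul (Complex.I / 2)).const_add (-Complex.I * ζ ^ 2)).add_const _
    have hBder : HasDerivAt (fun t => ζ * φ t + (Complex.I / 2) * deriv φ t)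
        (ζ * deriv φ x + (Complex.I / 2) * deriv (deriv φ) x) x :=
      (hp.const_mul ζ).add (hd.const_mul (Complex.I / 2))
    have hCder : HasDerivAt (fun t => -ζ * (starRingEnd ℂ) (φ t) +
        (Complex.I / 2) * (starRingEnd ℂ) (deriv φ t))
        (-ζ * (starRingEnd ℂ) (deriv φ x)
          + (Complex.I / 2) * (starRingEnd ℂ) (deriv (deriv φ) x)) x :=
      (hqx.const_mul (-ζ)).add (hqd.const_mul (Complex.I / 2))
    have H := (hAder.mul hAder).add (hBder.mul hCder)
    have hs : deriv (deriv φ) x = -2 * (ω : ℂ) * φ x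
        - 2 * (φ x * (starRingEnd ℂ) (φ x)) * φ x := by
      have h := hstat x
      rw [habs] at h
      linear_combination 2 * h
    have hcs : (starRingEnd ℂ) (deriv (deriv φ) x)
        = -2 * (ω : ℂ) * (starRingEnd ℂ) (φ x)
          - 2 * ((starRingEnd ℂ) (φ x) * φ x) * (starRingEnd ℂ) (φ x) := by
      have h := congrArg (starRingEnd ℂ) hs
      simpa [map_mul, map_sub, Complex.conj_ofReal, map_ofNat] using h
    refine H.congr_deriv (Eq.symm ?_)
    rw [hcs, hs]
    linear_combination (ζ ^ 2 * (deriv φ x * (starRingEnd ℂ) (φ x)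
      + φ x * (starRingEnd ℂ) (deriv φ x))) * Complex.I_sq
  have hconst := is_const_of_deriv_eq_zero (𝕜 := ℝ) (f := g)
    (fun x => (key x).differentiableAt) (fun x => (key x).deriv)
  intro x y
  have hx := congrFun hgeq x
  have hy := congrFun hgeq y
  rw [hx, hy]
  exact hconst x y
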